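/- Let E and F be real Hilbert spaces, let T be a closed, densely defined linear operator from E to F, with adjoint T*, and let H be a closed subspace of F containing the range of T. Suppose there is a constant c > 0 such that ‖T*y‖²_E ≥ c‖y‖²_F for every y ∈ dom(T*) ∩ H. Then for every y ∈ H there exists x ∈ E with Tx = y and ‖x‖²_E ≤ c⁻¹‖y‖²_F. -/

import Mathlib

set_option maxHeartbeats 1000000


open scoped InnerProductSpace

/-- Hörmander's functional-analytic lemma: let `E, F` be real Hilbert
spaces, `T` a closed densely defined operator from `E` to `F` with adjoint `T*`, and `H`
a closed subspace of `F` containing the range of `T`. If `‖T*y‖² ≥ c‖y‖²` for all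
`y ∈ dom(T*) ∩ H` with `c > 0`, then every `y ∈ H` is `T x` for some `x` with
`‖x‖² ≤ c⁻¹ ‖y‖²`. -/
theorem exists_solution_of_adjoint_estimate
    (E F : Type*) [NormedAddCommGroup E] [InnerProductSpace ℝ E] [CompleteSpace E]
    [NormedAddCommGroup F] [InnerProductSpace ℝ F] [CompleteSpace F]
    (T : E →ₗ.[ℝ] F) (hdense : Dense (T.domain : Set E)) (hclosed : T.IsClosed)
    (H : Submodule ℝ F) (hH : IsClosed (H : Set F))
    (hrange : ∀ x : T.domain, T x ∈ H)
    (c : ℝ) (hc : 0 < c)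
    (hineq : ∀ y : T.adjoint.domain, (y : F) ∈ H →
      c * ‖(y : F)‖ ^ 2 ≤ ‖T.adjoint y‖ ^ 2) :
    ∀ y ∈ H, ∃ x : T.domain, T x = y ∧ ‖(x : E)‖ ^ 2 ≤ c⁻¹ * ‖y‖ ^ 2 := by
  intro y hy
  haveI : CompleteSpace H := hH.completeSpace_coe
  -- Step 1: the key estimate `⟪y, z⟫² ≤ c⁻¹ ‖y‖² ‖T* z‖²` for `z ∈ dom T*`.
  have key : ∀ z : T.adjoint.domain,
      ⟪y, (z : F)⟫_ℝ ^ 2 ≤ c⁻¹ * ‖y‖ ^ 2 * ‖T.adjoint z‖ ^ 2 := by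
    intro z
    set z₁ : F := (H.orthogonalProjectionOnto (z : F) : F) with hz₁def
    have hz₁H : z₁ ∈ H := (H.orthogonalProjectionOnto (z : F)).2
    have hz₂perp : (z : F) - z₁ ∈ Hᗮ := H.sub_starProjection_mem_orthogonal _
    have hinner0 : ∀ x : T.domain, ⟪(0 : E), (x : E)⟫_ℝ = ⟪(z : F) - z₁, T x⟫_ℝ := by
      intro x
      rw [inner_zero_left, real_inner_comm]
      exact ((Submodule.mem_orthogonal H _).1 hz₂perp _ (hrange x)).symm
    have hmem : (z : F) - z₁ ∈ T.adjoint.domain :=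
      T.mem_adjoint_domain_of_exists _ ⟨0, hinner0⟩
    set z₂' : T.adjoint.domain := ⟨(z : F) - z₁, hmem⟩ with hz₂'def
    have hz₂zero : T.adjoint z₂' = 0 := LinearPMap.adjoint_apply_eq hdense z₂' hinner0
    have hz₁mem : z₁ ∈ T.adjoint.domain := by
      have : z₁ = (z : F) - ((z : F) - z₁) := (sub_sub_cancel _ _).symm
      rw [this]; exact sub_mem z.2 hmem
    set z₁' : T.adjoint.domain := ⟨z₁, hz₁mem⟩ with hz₁'def
    have hsum : z = z₁' + z₂' := by
      apply Subtype.ext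
      simp [hz₁'def, hz₂'def]
    have hTz : T.adjoint z = T.adjoint z₁' := by
      rw [hsum, T.adjoint.map_add, hz₂zero, add_zero]
    have hyz : ⟪y, (z : F)⟫_ℝ = ⟪y, z₁⟫_ℝ := by
      have h0 : ⟪y, (z : F) - z₁⟫_ℝ = 0 := by
        rw [real_inner_comm]
        exact (Submodule.mem_orthogonal' H _).1 hz₂perp _ hy
      have := inner_sub_right (𝕜 := ℝ) y (z : F) z₁
      linarith [this, h0]
    have hcs : ⟪y, z₁⟫_ℝ ^ 2 ≤ ‖y‖ ^ 2 * ‖z₁‖ ^ 2 := by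
      have := abs_real_inner_le_norm y z₁
      nlinarith [abs_nonneg ⟪y, z₁⟫_ℝ, sq_abs ⟪y, z₁⟫_ℝ, norm_nonneg y, norm_nonneg z₁]
    have hest := hineq z₁' hz₁H
    rw [hyz, hTz]
    have hc' : (0:ℝ) < c⁻¹ := inv_pos.2 hc
    have h1 : ‖z₁‖ ^ 2 ≤ c⁻¹ * ‖T.adjoint z₁'‖ ^ 2 := by
      have h2 := mul_le_mul_of_nonneg_left hest (inv_nonneg.2 hc.le)
      rwa [inv_mul_cancel_left₀ hc.ne'] at h2
    nlinarith [hcs, h1, sq_nonneg ‖y‖]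
  -- Step 2: construct `x` with `⟪x, T* z⟫ = ⟪y, z⟫` and `‖x‖ ≤ √(c⁻¹) ‖y‖`.
  set C : ℝ := Real.sqrt c⁻¹ * ‖y‖ with hCdef
  have hC0 : 0 ≤ C := mul_nonneg (Real.sqrt_nonneg _) (norm_nonneg _)
  set g : T.adjoint.domain →ₗ[ℝ] E := T.adjoint.toFun with hgdef
  set f : T.adjoint.domain →ₗ[ℝ] ℝ :=
    (innerSL ℝ y).toLinearMap.comp (T.adjoint.domain).subtype with hfdef
  have hfapp : ∀ z : T.adjoint.domain, f z = ⟪y, (z : F)⟫_ℝ := fun z => rfl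
  have hgapp : ∀ z : T.adjoint.domain, g z = T.adjoint z := fun z => rfl
  have habs : ∀ z : T.adjoint.domain, |f z| ≤ C * ‖g z‖ := by
    intro z
    have hk := key z
    have hsq : (C * ‖g z‖) ^ 2 = c⁻¹ * ‖y‖ ^ 2 * ‖T.adjoint z‖ ^ 2 := by
      rw [hgapp, mul_pow, hCdef, mul_pow, Real.sq_sqrt (inv_nonneg.2 hc.le)]
    have h2 : |f z| ^ 2 ≤ (C * ‖g z‖) ^ 2 := by
      rw [sq_abs, hsq, hfapp]; exact hk
    have hCg : 0 ≤ C * ‖g z‖ := mul_nonneg hC0 (norm_nonneg _)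
    nlinarith [abs_nonneg (f z)]
  have hker : LinearMap.ker g ≤ LinearMap.ker f := by
    intro z hz
    rw [LinearMap.mem_ker] at hz ⊢
    have := habs z
    rw [hz, norm_zero, mul_zero] at this
    exact abs_eq_zero.1 (le_antisymm this (abs_nonneg _))
  set ψ : LinearMap.range g →ₗ[ℝ] ℝ :=
    ((LinearMap.ker g).liftQ f hker).comp g.quotKerEquivRange.symm.toLinearMap with hψdef
  have hψapp : ∀ z : T.adjoint.domain, ∀ h : g z ∈ LinearMap.range g,
      ψ ⟨g z, h⟩ = f z := by
    intro z h
    have h1 : (⟨g z, h⟩ : LinearMap.range g) =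
        g.quotKerEquivRange (Submodule.Quotient.mk z) :=
      Subtype.ext (g.quotKerEquivRange_apply_mk z).symm
    rw [hψdef, LinearMap.comp_apply, h1]
    simp
  have hψbound : ∀ v : LinearMap.range g, ‖ψ v‖ ≤ C * ‖v‖ := by
    rintro ⟨v, hv⟩
    obtain ⟨z, rfl⟩ := hv
    rw [hψapp z ⟨z, rfl⟩]
    simpa [Real.norm_eq_abs] using habs z
  set ψc : LinearMap.range g →L[ℝ] ℝ := ψ.mkContinuous C hψbound with hψcdef
  obtain ⟨Φ, hΦext, hΦnorm⟩ := exists_extension_norm_eq (LinearMap.range g) ψc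
  have hΦle : ‖Φ‖ ≤ C := by
    rw [hΦnorm]
    exact ψ.mkContinuous_norm_le hC0 hψbound
  set x : E := (InnerProductSpace.toDual ℝ E).symm Φ with hxdef
  have hxnorm : ‖x‖ ≤ C := by
    rw [hxdef, LinearIsometryEquiv.norm_map]
    exact hΦle
  have hx : ∀ z : T.adjoint.domain, ⟪x, T.adjoint z⟫_ℝ = ⟪y, (z : F)⟫_ℝ := by
    intro z
    have h1 : ⟪x, T.adjoint z⟫_ℝ = Φ (T.adjoint z) := by
      rw [hxdef]; exact InnerProductSpace.toDual_symm_apply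
    have h2 : Φ (T.adjoint z) = ψc ⟨g z, ⟨z, rfl⟩⟩ := by
      have := hΦext ⟨g z, ⟨z, rfl⟩⟩
      simpa [hgapp] using this
    rw [h1, h2, hψcdef]
    simp only [LinearMap.mkContinuous_apply]
    rw [hψapp z ⟨z, rfl⟩, hfapp]
  -- Step 3: `(x, y)` belongs to the graph of `T`, via double orthogonal complement.
  set e : WithLp 2 (E × F) ≃L[ℝ] E × F := WithLp.prodContinuousLinearEquiv 2 ℝ E F with hedef
  set G : Submodule ℝ (WithLp 2 (E × F)) := T.graph.comap (e : WithLp 2 (E × F) →ₗ[ℝ] E × F)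
    with hGdef
  have hGclosed : IsClosed (G : Set (WithLp 2 (E × F))) := by
    have : (G : Set (WithLp 2 (E × F))) = e ⁻¹' (T.graph : Set (E × F)) := rfl
    rw [this]
    exact hclosed.preimage e.continuous
  set p : WithLp 2 (E × F) := (WithLp.equiv 2 (E × F)).symm (x, y) with hpdef
  have hp : p ∈ Gᗮᗮ := by
    rw [Submodule.mem_orthogonal]
    intro w hw
    set u : E := (e w).1 with hudef
    set v : F := (e w).2 with hvdef
    have hperp : ∀ a : T.domain, ⟪(a : E), u⟫_ℝ + ⟪T a, v⟫_ℝ = 0 := by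
      intro a
      have hmemG : (WithLp.equiv 2 (E × F)).symm ((a : E), T a) ∈ G := by
        rw [hGdef, Submodule.mem_comap]
        exact T.mem_graph a
      have := (Submodule.mem_orthogonal G w).1 hw _ hmemG
      rw [WithLp.prod_inner_apply] at this
      exact this
    have hadj : ∀ a : T.domain, ⟪-u, (a : E)⟫_ℝ = ⟪v, T a⟫_ℝ := by
      intro a
      have h1 := hperp a
      have h2 : ⟪(a : E), u⟫_ℝ = ⟪u, (a : E)⟫_ℝ := real_inner_comm _ _
      have h3 : ⟪T a, v⟫_ℝ = ⟪v, T a⟫_ℝ := real_inner_comm _ _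
      have h4 : ⟪-u, (a : E)⟫_ℝ = -⟪u, (a : E)⟫_ℝ := by
        rw [inner_neg_left]
      linarith
    have hvmem : v ∈ T.adjoint.domain :=
      T.mem_adjoint_domain_of_exists _ ⟨-u, hadj⟩
    have hTv : T.adjoint ⟨v, hvmem⟩ = -u :=
      LinearPMap.adjoint_apply_eq hdense _ hadj
    have hxv := hx ⟨v, hvmem⟩
    rw [hTv] at hxv
    rw [WithLp.prod_inner_apply]
    show ⟪u, x⟫_ℝ + ⟪v, y⟫_ℝ = 0
    have h5 : ⟪x, -u⟫_ℝ = -⟪x, u⟫_ℝ := by rw [inner_neg_right]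
    have h6 : ⟪x, u⟫_ℝ = ⟪u, x⟫_ℝ := real_inner_comm _ _
    have h7 : ⟪y, v⟫_ℝ = ⟪v, y⟫_ℝ := real_inner_comm _ _
    linarith [hxv]
  have hpG : p ∈ G := by
    rwa [Submodule.orthogonal_orthogonal_eq_closure,
      hGclosed.submodule_topologicalClosure_eq] at hp
  have hgraph : ((x, y) : E × F) ∈ T.graph := hpG
  rw [LinearPMap.mem_graph_iff] at hgraph
  obtain ⟨x', hx'1, hx'2⟩ := hgraph
  have hx'1' : (x' : E) = x := hx'1
  have hx'2' : T x' = y := hx'2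
  refine ⟨x', hx'2', ?_⟩
  rw [hx'1']
  calc ‖x‖ ^ 2 ≤ C ^ 2 := by
        have := norm_nonneg x
        nlinarith
    _ = c⁻¹ * ‖y‖ ^ 2 := by
        rw [hCdef, mul_pow, Real.sq_sqrt (inv_nonneg.2 hc.le)]
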